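/- Let A be a commutative ℚ-algebra and μ, s₀, t₁, f₂, g̃₃ ∈ A. For the equation y² = x³ + (1/4)μs₀²x² + ((1/2)μs₀t₁z + f₂z² + O(z³))x + ((1/4)μt₁²z² + g̃₃z³ + O(z⁴)), the Weierstrass discriminant satisfies Δ = (1/16)μ³s₀³(s₀³g̃₃ - s₀²t₁f₂ - t₁³)·z³ + O(z⁴). -/

import Mathlib

open PowerSeries

set_option maxHeartbeats 1000000 in
/-- Step 3 of the Tate algorithm for `Iₘ` (the new `I₃` ansatz, equation 4.9): for
`y² = x³ + (1/4)μs₀²·x² + ((1/2)μs₀t₁z + f₂z² + O(z³))x + ((1/4)μt₁²z² + g̃₃z³ + O(z⁴))`,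
the Weierstrass discriminant satisfies
`Δ = (1/16)μ³s₀³(s₀³g̃₃ - s₀²t₁f₂ - t₁³)z³ + O(z⁴)`. -/
theorem tate_I3_discriminant (A : Type*) [CommRing A] [Algebra ℚ A]
    (μ s₀ t₁ f₂ g₃ : A) (V W f g : PowerSeries A)
    (hV0 : PowerSeries.constantCoeff (R := A) V = 0)
    (hV1 : (PowerSeries.coeff (R := A) 1) V = algebraMap ℚ A (1/2) * μ * s₀ * t₁)
    (hV2 : (PowerSeries.coeff (R := A) 2) V = f₂)
    (hW0 : PowerSeries.constantCoeff (R := A) W = 0) (hW1 : (PowerSeries.coeff (R := A) 1) W = 0)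
    (hW2 : (PowerSeries.coeff (R := A) 2) W = algebraMap ℚ A (1/4) * μ * t₁ ^ 2)
    (hW3 : (PowerSeries.coeff (R := A) 3) W = g₃)
    (hf : f = PowerSeries.C (R := A) (algebraMap ℚ A (-1/3) * (algebraMap ℚ A (1/4) * μ * s₀ ^ 2) ^ 2) + V)
    (hg : g = PowerSeries.C (R := A) (algebraMap ℚ A (2/27) * (algebraMap ℚ A (1/4) * μ * s₀ ^ 2) ^ 3)
            - PowerSeries.C (R := A) (algebraMap ℚ A (1/3) * (algebraMap ℚ A (1/4) * μ * s₀ ^ 2)) * V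
            + W) :
    (PowerSeries.coeff (R := A) 0) (4 * f ^ 3 + 27 * g ^ 2) = 0 ∧
    (PowerSeries.coeff (R := A) 1) (4 * f ^ 3 + 27 * g ^ 2) = 0 ∧
    (PowerSeries.coeff (R := A) 2) (4 * f ^ 3 + 27 * g ^ 2) = 0 ∧
    (PowerSeries.coeff (R := A) 3) (4 * f ^ 3 + 27 * g ^ 2)
        = algebraMap ℚ A (1/16) * μ ^ 3 * s₀ ^ 3
            * (s₀ ^ 3 * g₃ - s₀ ^ 2 * t₁ * f₂ - t₁ ^ 3) := by
  have hV0' : (PowerSeries.coeff (R := A) 0) V = 0 := by rwa [coeff_zero_eq_constantCoeff]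
  have hW0' : (PowerSeries.coeff (R := A) 0) W = 0 := by rwa [coeff_zero_eq_constantCoeff]
  subst hf hg
  rw [← map_ofNat (C (R := A)) 4, ← map_ofNat (C (R := A)) 27]
  refine ⟨?_, ?_, ?_, ?_⟩ <;>
  · rw [← sub_eq_zero]
    simp only [pow_succ, pow_zero, one_mul, map_add, map_sub, coeff_C_mul,
      PowerSeries.coeff_mul, Finset.Nat.sum_antidiagonal_eq_sum_range_succ_mk,
      Finset.sum_range_succ, Finset.sum_range_zero, zero_add, coeff_C,
      hV0', hV1, hV2, hW0', hW1, hW2, hW3]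
    norm_num
    ring_nf
    simp only [← map_ofNat (algebraMap ℚ A), ← map_pow, mul_comm, mul_left_comm, mul_assoc, ← map_mul]
    simp only [Algebra.algebraMap_eq_smul_one, mul_smul_comm, smul_mul_assoc, smul_smul,
      mul_one, one_mul]
    module
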